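/- Assume κ⁰ > 0, κ¹ > 0 and that the pair is nondegenerate. Then the set of zeros in (0,∞) of the strictly increasing functions σ_{i,j} (those with ρ¹_j < κ¹/(m−1)) is bounded above and has no accumulation point other than 0, while the set of zeros of the strictly decreasing functions σ_{i,j} (those with ρ¹_j > κ¹/(m−1)) is bounded away from 0 and has no accumulation point other than +∞. Consequently there exist 0 < a ≤ b such that every degeneracy instant λ ∈ Λ with λ < a is a zero only of strictly increasing functions σ_{i,j}, and every λ ∈ Λ with λ > b is a zero only of strictly decreasing functions σ_{i,j}. -/

import Mathlib

lemma iso_helper (Z : Set ℝ) (x : ℝ) (hx : 0 < x)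
    (S : Finset ℝ) (hS : ∀ l ∈ Z, x/2 ≤ l → l ≤ 2*x → l ∈ S) :
    ∃ ε > (0:ℝ), ∀ l ∈ Z, l ≠ x → ε ≤ |l - x| := by
  classical
  set T := (S.filter (· ≠ x)).image (fun s => |s - x|) with hT
  refine ⟨min (x/2) (if h : T.Nonempty then T.min' h else 1), ?_, ?_⟩
  · refine lt_min (by linarith) ?_
    split_ifs with h
    · obtain ⟨s, hs, hval⟩ := Finset.mem_image.mp (T.min'_mem h)
      have hs' := Finset.mem_filter.mp hs
      have hsx : s ≠ x := by simpa using hs'.2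
      rw [← hval]
      exact abs_pos.mpr (sub_ne_zero.mpr hsx)
    · norm_num
  · intro l hl hlx
    rcases lt_or_ge l (x/2) with h1 | h1
    · refine le_trans (min_le_left _ _) ?_
      rw [abs_sub_comm, abs_of_nonneg (by linarith)]
      linarith
    rcases le_or_gt l (2*x) with h2 | h2
    · have hmem : l ∈ S := hS l hl h1 h2
      have hTm : |l - x| ∈ T := Finset.mem_image.mpr
        ⟨l, Finset.mem_filter.mpr ⟨hmem, by simpa using hlx⟩, rfl⟩
      refine le_trans (min_le_right _ _) ?_
      rw [dif_pos ⟨_, hTm⟩]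
      exact Finset.min'_le _ _ hTm
    · refine le_trans (min_le_left _ _) ?_
      rw [abs_of_nonneg (by linarith)]
      linarith

set_option maxHeartbeats 1000000 in
theorem stmt_8
    (m : ℕ) (hm : 3 ≤ m)
    (κ₀ κ₁ : ℝ)
    (ρ₀ ρ₁ : ℕ → ℝ)
    (hρ₀one : ρ₀ 1 = 0) (hρ₁one : ρ₁ 1 = 0)
    (hρ₀mono : ∀ i j : ℕ, 1 ≤ i → i < j → ρ₀ i < ρ₀ j)
    (hρ₁mono : ∀ i j : ℕ, 1 ≤ i → i < j → ρ₁ i < ρ₁ j)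
    (hρ₀unb : ∀ C : ℝ, ∃ i : ℕ, 1 ≤ i ∧ C < ρ₀ i)
    (hρ₁unb : ∀ C : ℝ, ∃ j : ℕ, 1 ≤ j ∧ C < ρ₁ j)
    (σ : ℕ → ℕ → ℝ → ℝ)
    (hσ : ∀ (i j : ℕ) (l : ℝ), 0 < l →
      σ i j l = ρ₀ i + ρ₁ j / l - (κ₀ + κ₁ / l) / ((m : ℝ) - 1))
    (hκ₀ : 0 < κ₀) (hκ₁ : 0 < κ₁)
    (istar jstar : ℕ)
    (histar1 : 1 ≤ istar) (histar2 : κ₀ / ((m : ℝ) - 1) ≤ ρ₀ istar)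
    (histar3 : ∀ i : ℕ, 1 ≤ i → i < istar → ρ₀ i < κ₀ / ((m : ℝ) - 1))
    (hjstar1 : 1 ≤ jstar) (hjstar2 : κ₁ / ((m : ℝ) - 1) ≤ ρ₁ jstar)
    (hjstar3 : ∀ j : ℕ, 1 ≤ j → j < jstar → ρ₁ j < κ₁ / ((m : ℝ) - 1))
    (hnondeg : ¬ (ρ₀ istar = κ₀ / ((m : ℝ) - 1) ∧ ρ₁ jstar = κ₁ / ((m : ℝ) - 1)))
    (Λ : Set ℝ)
    (hΛ : Λ = {l : ℝ | 0 < l ∧ ∃ i j : ℕ, 1 ≤ i ∧ 1 ≤ j ∧ (i, j) ≠ (1, 1) ∧ σ i j l = 0})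
    (Zinc Zdec : Set ℝ)
    (hZinc : Zinc = {l : ℝ | 0 < l ∧ ∃ i j : ℕ, 1 ≤ i ∧ 1 ≤ j ∧
      ρ₁ j < κ₁ / ((m : ℝ) - 1) ∧ σ i j l = 0})
    (hZdec : Zdec = {l : ℝ | 0 < l ∧ ∃ i j : ℕ, 1 ≤ i ∧ 1 ≤ j ∧
      κ₁ / ((m : ℝ) - 1) < ρ₁ j ∧ σ i j l = 0}) :
    BddAbove Zinc ∧
    (∀ x : ℝ, 0 < x → ∃ ε > (0 : ℝ), ∀ l ∈ Zinc, l ≠ x → ε ≤ |l - x|) ∧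
    (∃ c > (0 : ℝ), ∀ l ∈ Zdec, c ≤ l) ∧
    (∀ x : ℝ, 0 < x → ∃ ε > (0 : ℝ), ∀ l ∈ Zdec, l ≠ x → ε ≤ |l - x|) ∧
    (∃ a b : ℝ, 0 < a ∧ a ≤ b ∧
      (∀ l ∈ Λ, l < a → ∀ i j : ℕ, 1 ≤ i → 1 ≤ j → (i, j) ≠ (1, 1) →
        σ i j l = 0 → ρ₁ j < κ₁ / ((m : ℝ) - 1)) ∧
      (∀ l ∈ Λ, b < l → ∀ i j : ℕ, 1 ≤ i → 1 ≤ j → (i, j) ≠ (1, 1) →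
        σ i j l = 0 → κ₁ / ((m : ℝ) - 1) < ρ₁ j)) := by
  have hm' : (3:ℝ) ≤ (m:ℝ) := by exact_mod_cast hm
  set M1 : ℝ := (m:ℝ) - 1 with hM1def
  have hM1pos : (0:ℝ) < M1 := by rw [hM1def]; linarith
  have hM1ne : M1 ≠ 0 := ne_of_gt hM1pos
  have hκ₀M : 0 < κ₀ / M1 := div_pos hκ₀ hM1pos
  have hκ₁M : 0 < κ₁ / M1 := div_pos hκ₁ hM1pos
  have hρ₀mono' : ∀ i j : ℕ, 1 ≤ i → i ≤ j → ρ₀ i ≤ ρ₀ j := by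
    intro i j hi hij
    rcases eq_or_lt_of_le hij with rfl | h
    · exact le_rfl
    · exact (hρ₀mono i j hi h).le
  have hρ₁mono' : ∀ i j : ℕ, 1 ≤ i → i ≤ j → ρ₁ i ≤ ρ₁ j := by
    intro i j hi hij
    rcases eq_or_lt_of_le hij with rfl | h
    · exact le_rfl
    · exact (hρ₁mono i j hi h).le
  have hρ₀nn : ∀ i, 1 ≤ i → 0 ≤ ρ₀ i := by
    intro i hi; rw [← hρ₀one]; exact hρ₀mono' 1 i le_rfl hi
  have hρ₁nn : ∀ j, 1 ≤ j → 0 ≤ ρ₁ j := by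
    intro j hj; rw [← hρ₁one]; exact hρ₁mono' 1 j le_rfl hj
  -- key zero equation
  have key : ∀ i j : ℕ, ∀ l : ℝ, 0 < l → σ i j l = 0 →
      (ρ₀ i - κ₀ / M1) * l = -(ρ₁ j - κ₁ / M1) := by
    intro i j l hl h
    have hl0 : l ≠ 0 := ne_of_gt hl
    have h2 := hσ i j l hl
    have h3 : (ρ₀ i - κ₀ / M1) * l + (ρ₁ j - κ₁ / M1)
        = l * (ρ₀ i + ρ₁ j / l - (κ₀ + κ₁ / l) / M1) := by
      field_simp
      ring
    rw [← h2, h, mul_zero] at h3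
    linarith
  have histar_le : ∀ i, 1 ≤ i → 0 < ρ₀ i - κ₀ / M1 → istar ≤ i := by
    intro i hi h
    by_contra hc
    push_neg at hc
    have := histar3 i hi hc
    linarith
  have hjstar_lt : ∀ j, 1 ≤ j → ρ₁ j < κ₁ / M1 → j < jstar := by
    intro j hj h
    by_contra hc
    push_neg at hc
    have := hρ₁mono' jstar j hjstar1 hc
    linarith
  have hAzero : ∀ i, 1 ≤ i → ρ₀ i = κ₀ / M1 → i = istar := by
    intro i hi h
    rcases lt_trichotomy i istar with hc | hc | hc
    · have := histar3 i hi hc; linarith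
    · exact hc
    · have := hρ₀mono istar i histar1 hc; linarith
  have hBzero : ∀ j, 1 ≤ j → ρ₁ j = κ₁ / M1 → j = jstar := by
    intro j hj h
    rcases lt_trichotomy j jstar with hc | hc | hc
    · have := hjstar3 j hj hc; linarith
    · exact hc
    · have := hρ₁mono jstar j hjstar1 hc; linarith
  have hnotboth : ∀ i j, 1 ≤ i → 1 ≤ j → ρ₀ i = κ₀ / M1 → ρ₁ j = κ₁ / M1 → False := by
    intro i j hi hj h1 h2
    have e1 := hAzero i hi h1
    have e2 := hBzero j hj h2
    subst e1; subst e2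
    exact hnondeg ⟨h1, h2⟩
  have hAposLB : ∃ Ap > (0:ℝ), ∀ i, 1 ≤ i → 0 < ρ₀ i - κ₀ / M1 → Ap ≤ ρ₀ i - κ₀ / M1 := by
    by_cases h : 0 < ρ₀ istar - κ₀ / M1
    · refine ⟨_, h, ?_⟩
      intro i hi hAi
      have h1 := histar_le i hi hAi
      have h2 := hρ₀mono' istar i histar1 h1
      linarith
    · push_neg at h
      have heq : ρ₀ istar - κ₀ / M1 = 0 := by linarith
      refine ⟨ρ₀ (istar+1) - κ₀ / M1, ?_, ?_⟩
      · have := hρ₀mono istar (istar+1) histar1 (Nat.lt_succ_self _); linarith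
      · intro i hi hAi
        have h1 := histar_le i hi hAi
        have h2 : i ≠ istar := by intro h'; rw [h'] at hAi; linarith
        have h3 : istar + 1 ≤ i := by omega
        have := hρ₀mono' (istar+1) i (by omega) h3
        linarith
  have hBposLB : ∃ Bp > (0:ℝ), ∀ j, 1 ≤ j → 0 < ρ₁ j - κ₁ / M1 → Bp ≤ ρ₁ j - κ₁ / M1 := by
    by_cases h : 0 < ρ₁ jstar - κ₁ / M1
    · refine ⟨_, h, ?_⟩
      intro j hj hBj
      have h1 : jstar ≤ j := by
        by_contra hc
        push_neg at hc
        have := hjstar3 j hj hc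
        linarith
      have h2 := hρ₁mono' jstar j hjstar1 h1
      linarith
    · push_neg at h
      have heq : ρ₁ jstar - κ₁ / M1 = 0 := by linarith
      refine ⟨ρ₁ (jstar+1) - κ₁ / M1, ?_, ?_⟩
      · have := hρ₁mono jstar (jstar+1) hjstar1 (Nat.lt_succ_self _); linarith
      · intro j hj hBj
        have h1 : jstar ≤ j := by
          by_contra hc
          push_neg at hc
          have := hjstar3 j hj hc
          linarith
        have h2 : j ≠ jstar := by intro h'; rw [h'] at hBj; linarith
        have h3 : jstar + 1 ≤ j := by omega
        have := hρ₁mono' (jstar+1) j (by omega) h3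
        linarith
  obtain ⟨Ap, hAp, hApLB⟩ := hAposLB
  obtain ⟨Bp, hBp, hBpLB⟩ := hBposLB
  -- upper bound for Zinc
  have hZincUB : ∀ l ∈ Zinc, l ≤ κ₁ / M1 / Ap := by
    intro l hl
    rw [hZinc] at hl
    obtain ⟨hlpos, i, j, hi, hj, hBj, hs⟩ := hl
    have hk := key i j l hlpos hs
    have hBneg : ρ₁ j - κ₁ / M1 < 0 := by linarith
    have hApos : 0 < ρ₀ i - κ₀ / M1 := by
      by_contra hc
      push_neg at hc
      nlinarith [mul_nonneg (neg_nonneg.mpr hc) hlpos.le]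
    have h1 := hApLB i hi hApos
    have h2 : -(ρ₁ j - κ₁ / M1) ≤ κ₁ / M1 := by
      have := hρ₁nn j hj; linarith
    rw [le_div_iff₀ hAp]
    nlinarith [mul_le_mul_of_nonneg_left h1 hlpos.le]
  -- lower bound for Zdec
  have hZdecLB : ∀ l ∈ Zdec, Bp / (κ₀ / M1) ≤ l := by
    intro l hl
    rw [hZdec] at hl
    obtain ⟨hlpos, i, j, hi, hj, hBj, hs⟩ := hl
    have hk := key i j l hlpos hs
    have hBpos : 0 < ρ₁ j - κ₁ / M1 := by linarith
    have hAneg : ρ₀ i - κ₀ / M1 < 0 := by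
      by_contra hc; push_neg at hc
      nlinarith [mul_nonneg hc hlpos.le]
    have h1 := hBpLB j hj hBpos
    have h2 : -(ρ₀ i - κ₀ / M1) ≤ κ₀ / M1 := by
      have := hρ₀nn i hi; linarith
    rw [div_le_iff₀ hκ₀M]
    nlinarith [mul_le_mul_of_nonneg_right h2 hlpos.le]
  -- Zinc isolation
  have hZincIso : ∀ x : ℝ, 0 < x → ∃ ε > (0:ℝ), ∀ l ∈ Zinc, l ≠ x → ε ≤ |l - x| := by
    intro x hx
    obtain ⟨i0, hi0, hρi0⟩ := hρ₀unb (κ₁ / M1 / (x/2) + κ₀ / M1)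
    refine iso_helper Zinc x hx
      (((Finset.range i0) ×ˢ (Finset.range jstar)).image
        (fun p => -(ρ₁ p.2 - κ₁ / M1) / (ρ₀ p.1 - κ₀ / M1))) ?_
    intro l hl h1 h2
    rw [hZinc] at hl
    obtain ⟨hlpos, i, j, hi, hj, hBj, hs⟩ := hl
    have hk := key i j l hlpos hs
    have hBneg : ρ₁ j - κ₁ / M1 < 0 := by linarith
    have hApos : 0 < ρ₀ i - κ₀ / M1 := by
      by_contra hc; push_neg at hc
      nlinarith [mul_nonneg (neg_nonneg.mpr hc) hlpos.le]
    have hx2 : (0:ℝ) < x/2 := by linarith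
    have hBb : -(ρ₁ j - κ₁ / M1) ≤ κ₁ / M1 := by
      have := hρ₁nn j hj; linarith
    have hAub : ρ₀ i - κ₀ / M1 ≤ κ₁ / M1 / (x/2) := by
      rw [le_div_iff₀ hx2]
      nlinarith [mul_le_mul_of_nonneg_left h1 hApos.le]
    have hii0 : i < i0 := by
      by_contra hc
      push_neg at hc
      have := hρ₀mono' i0 i hi0 hc
      linarith
    have hjj : j < jstar := hjstar_lt j hj hBj
    refine Finset.mem_image.mpr ⟨(i, j), Finset.mem_product.mpr
      ⟨Finset.mem_range.mpr hii0, Finset.mem_range.mpr hjj⟩, ?_⟩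
    dsimp only
    rw [div_eq_iff (ne_of_gt hApos)]
    linear_combination -hk
  -- Zdec isolation
  have hZdecIso : ∀ x : ℝ, 0 < x → ∃ ε > (0:ℝ), ∀ l ∈ Zdec, l ≠ x → ε ≤ |l - x| := by
    intro x hx
    obtain ⟨j0, hj0, hρj0⟩ := hρ₁unb (κ₀ / M1 * (2*x) + κ₁ / M1)
    refine iso_helper Zdec x hx
      (((Finset.range istar) ×ˢ (Finset.range j0)).image
        (fun p => -(ρ₁ p.2 - κ₁ / M1) / (ρ₀ p.1 - κ₀ / M1))) ?_
    intro l hl h1 h2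
    rw [hZdec] at hl
    obtain ⟨hlpos, i, j, hi, hj, hBj, hs⟩ := hl
    have hk := key i j l hlpos hs
    have hBpos : 0 < ρ₁ j - κ₁ / M1 := by linarith
    have hAneg : ρ₀ i - κ₀ / M1 < 0 := by
      by_contra hc; push_neg at hc
      nlinarith [mul_nonneg hc hlpos.le]
    have hii : i < istar := by
      by_contra hc
      push_neg at hc
      have := hρ₀mono' istar i histar1 hc
      linarith
    have hAb : -(ρ₀ i - κ₀ / M1) ≤ κ₀ / M1 := by
      have := hρ₀nn i hi; linarith
    have hBub : ρ₁ j - κ₁ / M1 ≤ κ₀ / M1 * (2*x) := by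
      nlinarith [mul_le_mul_of_nonneg_right hAb hlpos.le,
        mul_le_mul_of_nonneg_left h2 hκ₀M.le]
    have hjj : j < j0 := by
      by_contra hc
      push_neg at hc
      have := hρ₁mono' j0 j hj0 hc
      linarith
    refine Finset.mem_image.mpr ⟨(i, j), Finset.mem_product.mpr
      ⟨Finset.mem_range.mpr hii, Finset.mem_range.mpr hjj⟩, ?_⟩
    dsimp only
    rw [div_eq_iff (ne_of_lt hAneg)]
    linear_combination -hk
  -- middle case impossible
  have hmid : ∀ i j : ℕ, ∀ l : ℝ, 1 ≤ i → 1 ≤ j → 0 < l → σ i j l = 0 →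
      ρ₁ j ≠ κ₁ / M1 := by
    intro i j l hi hj hlpos hs h
    have hk := key i j l hlpos hs
    have hA0 : (ρ₀ i - κ₀ / M1) * l = 0 := by rw [hk, h]; ring
    rcases mul_eq_zero.mp hA0 with h' | h'
    · exact hnotboth i j hi hj (by linarith) h
    · exact absurd h' (ne_of_gt hlpos)
  refine ⟨⟨κ₁ / M1 / Ap, fun l hl => hZincUB l hl⟩, hZincIso,
    ⟨Bp / (κ₀ / M1), div_pos hBp hκ₀M, hZdecLB⟩, hZdecIso,
    Bp / (κ₀ / M1), max (Bp / (κ₀ / M1)) (κ₁ / M1 / Ap),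
    div_pos hBp hκ₀M, le_max_left _ _, ?_, ?_⟩
  · intro l hlΛ hla i j hi hj _ hs
    rw [hΛ] at hlΛ
    obtain ⟨hlpos, -⟩ := hlΛ
    rcases lt_trichotomy (ρ₁ j) (κ₁ / M1) with h | h | h
    · exact h
    · exact absurd h (hmid i j l hi hj hlpos hs)
    · exfalso
      have hmem : l ∈ Zdec := by
        rw [hZdec]; exact ⟨hlpos, i, j, hi, hj, h, hs⟩
      have := hZdecLB l hmem
      linarith
  · intro l hlΛ hbl i j hi hj _ hs
    rw [hΛ] at hlΛ
    obtain ⟨hlpos, -⟩ := hlΛ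
    rcases lt_trichotomy (ρ₁ j) (κ₁ / M1) with h | h | h
    · exfalso
      have hmem : l ∈ Zinc := by
        rw [hZinc]; exact ⟨hlpos, i, j, hi, hj, h, hs⟩
      have h2 := hZincUB l hmem
      have h3 := le_max_right (Bp / (κ₀ / M1)) (κ₁ / M1 / Ap)
      linarith
    · exact absurd h (hmid i j l hi hj hlpos hs)
    · exact h
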